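/- Let E be a stationary and co-stationary subset of ω₁ with the subspace topology. Then E is ω₁-compact (every closed discrete subspace of E is countable), but E is not σ-countably compact (E is not the union of countably many countably compact subspaces). -/

import Mathlib

open Set Topology Filter

/-- `C` is a closed unbounded (club) subset of the ordinal `δ`. -/
def IsClubIn (C : Set Ordinal) (δ : Ordinal) : Prop :=
  C ⊆ Set.Iio δ ∧
  (∀ a < δ, ∃ b ∈ C, a ≤ b ∧ b < δ) ∧
  (∀ a < δ, a ≠ 0 → (∀ b < a, ∃ c ∈ C, b < c ∧ c < a) → a ∈ C)

/-- A space is ω₁-compact (has countable extent) if every closed discrete subspace is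
countable. -/
def OmegaOneCompact (X : Type*) [TopologicalSpace X] : Prop :=
  ∀ D : Set X, IsClosed D → DiscreteTopology D → D.Countable

/-- A subset `K` is countably compact if every countably infinite subset of `K` has an
accumulation point in `K`. -/
def CountablyCompactSet {X : Type*} [TopologicalSpace X] (K : Set X) : Prop :=
  ∀ Z ⊆ K, Z.Countable → Z.Infinite → ∃ x ∈ K, AccPt x (𝓟 Z)

/-- A space is σ-countably compact if it is the union of countably many countably
compact subspaces. -/
def SigmaCountablyCompact (X : Type*) [TopologicalSpace X] : Prop :=
  ∃ C : ℕ → Set X, (∀ n, CountablyCompactSet (C n)) ∧ (⋃ n, C n) = Set.univ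

section AuxLemmas

universe u

lemma sup_lt_omega1 (f : ℕ → Ordinal.{u}) (h : ∀ n, f n < (Cardinal.aleph 1).ord) :
    (⨆ n, f n) < (Cardinal.aleph 1).ord :=
  Cardinal.iSup_lt_ord_lift_of_isRegular Cardinal.isRegular_aleph_one
    (by simpa using Cardinal.aleph0_lt_aleph_one) h

lemma countable_Iio_omega1 {x : Ordinal.{u}} (hx : x < (Cardinal.aleph 1).ord) :
    (Set.Iio x).Countable := by
  rw [Cardinal.countable_iff_lt_aleph_one, Ordinal.mk_Iio_ordinal]
  have h1 : x.card < Cardinal.aleph 1 := Cardinal.lt_ord.mp hx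
  have : Cardinal.lift.{u+1} x.card < Cardinal.lift.{u+1} (Cardinal.aleph 1) :=
    Cardinal.lift_lt.mpr h1
  simpa using this

lemma unbounded_of_uncountable {A : Set Ordinal.{u}} (hA : A ⊆ Set.Iio (Cardinal.aleph 1).ord)
    (hc : ¬ A.Countable) : ∀ a < (Cardinal.aleph 1).ord, ∃ c ∈ A, a < c ∧ c < (Cardinal.aleph 1).ord := by
  intro a ha
  by_contra h
  push_neg at h
  apply hc
  have hsub : A ⊆ Set.Iio (Order.succ a) := by
    intro c hcA
    have := h c hcA
    rcases lt_or_ge a c with h1 | h1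
    · exact absurd (this h1) (not_le.mpr (hA hcA))
    · exact Order.lt_succ_of_le h1
  have hlim : Order.IsSuccLimit (Cardinal.aleph 1).ord :=
    Cardinal.isSuccLimit_ord (Cardinal.aleph0_le_aleph 1)
  exact (countable_Iio_omega1 (hlim.succ_lt ha)).mono hsub

/-- The set of nonzero ordinals below `ω₁` in which `A` is cofinal. -/
def derivedClub (A : Set Ordinal.{u}) : Set Ordinal.{u} :=
  {x | x < (Cardinal.aleph 1).ord ∧ x ≠ 0 ∧ ∀ b < x, ∃ c ∈ A, b < c ∧ c < x}

lemma isClubIn_derivedClub {A : Set Ordinal.{u}}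
    (hub : ∀ a < (Cardinal.aleph 1).ord, ∃ c ∈ A, a < c ∧ c < (Cardinal.aleph 1).ord) :
    (derivedClub A ⊆ Set.Iio (Cardinal.aleph 1).ord) ∧
    (∀ a < (Cardinal.aleph 1).ord, ∃ b ∈ derivedClub A,
      a ≤ b ∧ b < (Cardinal.aleph 1).ord) ∧
    (∀ a < (Cardinal.aleph 1).ord, a ≠ 0 →
      (∀ b < a, ∃ c ∈ derivedClub A, b < c ∧ c < a) → a ∈ derivedClub A) := by
  refine ⟨fun x hx => hx.1, ?_, ?_⟩
  · -- unboundedness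
    intro a ha
    choose g hg1 hg2 hg3 using hub
    let F : ℕ → {x : Ordinal.{u} // x < (Cardinal.aleph 1).ord} := fun n =>
      Nat.rec ⟨a, ha⟩ (fun _ p => ⟨g p.1 p.2, hg3 p.1 p.2⟩) n
    set f : ℕ → Ordinal.{u} := fun n => (F n).1 with hf
    have hflt : ∀ n, f n < (Cardinal.aleph 1).ord := fun n => (F n).2
    have hstep : ∀ n, f n < f (n + 1) := fun n => hg2 (F n).1 (F n).2
    have hmem : ∀ n, f (n + 1) ∈ A := fun n => hg1 (F n).1 (F n).2
    have hf0 : f 0 = a := rfl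
    refine ⟨⨆ n, f n, ⟨sup_lt_omega1 f hflt, ?_, ?_⟩, ?_, sup_lt_omega1 f hflt⟩
    · -- nonzero
      intro h0
      have h1 : f 1 ≤ ⨆ n, f n := Ordinal.le_iSup f 1
      rw [h0] at h1
      exact absurd (lt_of_le_of_lt (zero_le (a := f 0)) (lt_of_lt_of_le (hstep 0) (h0 ▸ Ordinal.le_iSup f 1))) (by simp)
    · -- cofinality of A below the sup
      intro b hb
      obtain ⟨n, hn⟩ := Ordinal.lt_iSup_iff.mp hb
      exact ⟨f (n + 1), hmem n, lt_of_lt_of_le hn (le_of_lt (hstep n)),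
        lt_of_lt_of_le (hstep (n + 1)) (Ordinal.le_iSup f (n + 2))⟩
    · exact hf0 ▸ Ordinal.le_iSup f 0
  · -- closedness
    intro a ha ha0 hacc
    refine ⟨ha, ha0, fun b hb => ?_⟩
    obtain ⟨c, hc, hbc, hca⟩ := hacc b hb
    obtain ⟨d, hd, hbd, hdc⟩ := hc.2.2 b hbc
    exact ⟨d, hd, hbd, lt_trans hdc hca⟩

lemma exists_cofinal_seq {A : Set Ordinal.{u}} {x : Ordinal.{u}}
    (hx1 : x < (Cardinal.aleph 1).ord) (hx0 : x ≠ 0)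
    (hx : ∀ b < x, ∃ c ∈ A, b < c ∧ c < x) :
    ∃ f : ℕ → Ordinal.{u}, StrictMono f ∧ (∀ n, f n ∈ A) ∧ (∀ n, f n < x) ∧
      ∀ b < x, ∃ n, b < f n := by
  have hne : (Set.Iio x).Nonempty := ⟨0, pos_iff_ne_zero.mpr hx0⟩
  obtain ⟨s, hs⟩ := (countable_Iio_omega1 hx1).exists_eq_range hne
  have hslt : ∀ n, s n < x := fun n => by
    have : s n ∈ Set.Iio x := hs ▸ Set.mem_range_self n
    exact this
  choose g hg1 hg2 hg3 using hx
  let F : ℕ → {y : Ordinal.{u} // y < x} := fun n =>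
    Nat.rec ⟨g (s 0) (hslt 0), hg3 _ _⟩
      (fun n p => ⟨g (max p.1 (s (n + 1))) (max_lt p.2 (hslt (n + 1))), hg3 _ _⟩) n
  set f : ℕ → Ordinal.{u} := fun n => (F n).1 with hfdef
  have hmem : ∀ n, f n ∈ A := by
    intro n
    cases n with
    | zero => exact hg1 _ _
    | succ m => exact hg1 _ _
  have hlt : ∀ n, f n < x := fun n => (F n).2
  have hstep : ∀ n, f n < f (n + 1) :=
    fun n => lt_of_le_of_lt (le_max_left _ _) (hg2 (max (F n).1 (s (n+1))) _)
  have hdom : ∀ n, s n < f n := by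
    intro n
    cases n with
    | zero => exact hg2 _ _
    | succ m => exact lt_of_le_of_lt (le_max_right _ _) (hg2 _ _)
  refine ⟨f, strictMono_nat_of_lt_succ hstep, hmem, hlt, fun b hb => ?_⟩
  have : b ∈ Set.Iio x := hb
  rw [hs] at this
  obtain ⟨n, rfl⟩ := this
  exact ⟨n, hdom n⟩

lemma accPt_range_eq {f : ℕ → Ordinal.{u}} (hmono : StrictMono f) {x : Ordinal.{u}}
    (hfx : ∀ n, f n < x) (hcof : ∀ b < x, ∃ n, b < f n) {y : Ordinal.{u}}
    (hy : AccPt y (𝓟 (Set.range f))) : y = x := by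
  rw [accPt_iff_nhds] at hy
  by_contra hne
  rcases lt_or_gt_of_ne hne with h | h
  · obtain ⟨n, hn⟩ := hcof y h
    have hFfin : (f '' {m | m < n}).Finite := (Set.finite_Iio n).image f
    have hUopen : IsOpen (Set.Iio (f n) \ (f '' {m | m < n} \ {y})) :=
      isOpen_Iio.sdiff ((hFfin.diff).isClosed)
    have hyU : y ∈ Set.Iio (f n) \ (f '' {m | m < n} \ {y}) := by
      refine ⟨hn, fun hc => hc.2 rfl⟩
    obtain ⟨z, ⟨hzU, hzr⟩, hzy⟩ := hy _ (hUopen.mem_nhds hyU)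
    obtain ⟨m, rfl⟩ := hzr
    have hmn : m < n := hmono.lt_iff_lt.mp hzU.1
    exact hzU.2 ⟨Set.mem_image_of_mem f hmn, hzy⟩
  · obtain ⟨z, ⟨hzU, hzr⟩, hzy⟩ := hy (Set.Ioi x) (isOpen_Ioi.mem_nhds h)
    obtain ⟨m, rfl⟩ := hzr
    exact absurd (lt_trans (hfx m) hzU) (lt_irrefl _)

lemma accPt_subtype_image {X : Type*} [TopologicalSpace X] {S : Set X} {Z : Set ↥S} {e : ↥S}
    (h : AccPt e (𝓟 Z)) : AccPt (e : X) (𝓟 (Subtype.val '' Z)) := by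
  rw [accPt_iff_nhds] at h ⊢
  intro V hV
  obtain ⟨y, ⟨hyV, hyZ⟩, hy⟩ := h (Subtype.val ⁻¹' V)
    (by rw [nhds_subtype]; exact preimage_mem_comap hV)
  exact ⟨(y : X), ⟨hyV, Set.mem_image_of_mem _ hyZ⟩, by simpa [Subtype.ext_iff] using hy⟩

lemma uncountable_of_stationary {E : Set Ordinal.{u}}
    (hE : E ⊆ Set.Iio (Cardinal.aleph 1).ord)
    (hstat : ∀ C : Set Ordinal.{u},
      (C ⊆ Set.Iio (Cardinal.aleph 1).ord ∧
       (∀ a < (Cardinal.aleph 1).ord, ∃ b ∈ C, a ≤ b ∧ b < (Cardinal.aleph 1).ord) ∧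
       (∀ a < (Cardinal.aleph 1).ord, a ≠ 0 →
         (∀ b < a, ∃ c ∈ C, b < c ∧ c < a) → a ∈ C)) → (E ∩ C).Nonempty) :
    ¬ E.Countable := by
  intro hc
  have hlim : Order.IsSuccLimit (Cardinal.aleph 1).ord :=
    Cardinal.isSuccLimit_ord (Cardinal.aleph0_le_aleph 1)
  have hne : E.Nonempty := by
    obtain ⟨e, heE, _⟩ := hstat (Set.Iio (Cardinal.aleph 1).ord)
      ⟨subset_rfl, fun a ha => ⟨a, ha, le_rfl, ha⟩, fun a ha _ _ => ha⟩
    exact ⟨e, heE⟩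
  obtain ⟨s, hs⟩ := hc.exists_eq_range hne
  have hslt : ∀ n, s n < (Cardinal.aleph 1).ord := fun n =>
    hE (hs ▸ Set.mem_range_self n)
  set x : Ordinal.{u} := ⨆ n, s n with hxdef
  have hx : x < (Cardinal.aleph 1).ord := sup_lt_omega1 s hslt
  have hunb : ∀ a < (Cardinal.aleph 1).ord, ∃ b ∈ Set.Ioo x (Cardinal.aleph 1).ord,
      a ≤ b ∧ b < (Cardinal.aleph 1).ord := by
    intro a ha
    refine ⟨max (Order.succ x) a, ⟨lt_of_lt_of_le (Order.lt_succ x) (le_max_left _ _),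
      max_lt (hlim.succ_lt hx) ha⟩, le_max_right _ _, max_lt (hlim.succ_lt hx) ha⟩
  have hcl : ∀ a < (Cardinal.aleph 1).ord, a ≠ 0 →
      (∀ b < a, ∃ c ∈ Set.Ioo x (Cardinal.aleph 1).ord, b < c ∧ c < a) →
      a ∈ Set.Ioo x (Cardinal.aleph 1).ord := by
    intro a ha ha0 hacc
    obtain ⟨c, hc, _, hca⟩ := hacc 0 (pos_iff_ne_zero.mpr ha0)
    exact ⟨lt_trans hc.1 hca, ha⟩
  obtain ⟨e, heE, hex, heδ⟩ := hstat (Set.Ioo x (Cardinal.aleph 1).ord)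
    ⟨fun y hy => hy.2, hunb, hcl⟩
  have : e ≤ x := by
    have : e ∈ Set.range s := hs ▸ heE
    obtain ⟨n, rfl⟩ := this
    exact Ordinal.le_iSup s n
  exact absurd hex (not_lt.mpr this)

end AuxLemmas

/-- A stationary, co-stationary subset of ω₁ with the subspace topology is ω₁-compact
but not σ-countably compact. -/
theorem stationary_costationary_omega1Compact_not_sigmaCC (E : Set Ordinal)
    (hE : E ⊆ Set.Iio (Cardinal.aleph 1).ord)
    (hstat : ∀ C : Set Ordinal, IsClubIn C (Cardinal.aleph 1).ord → (E ∩ C).Nonempty)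
    (hcostat : ∀ C : Set Ordinal, IsClubIn C (Cardinal.aleph 1).ord →
      ((Set.Iio (Cardinal.aleph 1).ord \ E) ∩ C).Nonempty) :
    OmegaOneCompact ↥E ∧ ¬ SigmaCountablyCompact ↥E := by
  have hEun : ¬ E.Countable := uncountable_of_stationary hE hstat
  constructor
  · -- ω₁-compactness
    intro D hDclosed hDdisc
    by_contra hDc
    set A : Set Ordinal := Subtype.val '' D with hAdef
    have hAE : A ⊆ E := by rintro a ⟨y, _, rfl⟩; exact y.2
    have hAc : ¬ A.Countable := by
      intro h
      exact hDc ((h.preimage Subtype.val_injective).mono (Set.subset_preimage_image _ _))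
    have hub := unbounded_of_uncountable (hAE.trans hE) hAc
    have hclub := isClubIn_derivedClub hub
    obtain ⟨e₀, he₀E, he₀C⟩ := hstat (derivedClub A) ⟨hclub.1, hclub.2.1, hclub.2.2⟩
    set e : ↥E := ⟨e₀, he₀E⟩ with hedef
    have hacc : AccPt e (𝓟 D) := by
      rw [accPt_iff_nhds]
      intro U hU
      obtain ⟨u, hu, hsub⟩ := (mem_nhds_subtype E e U).mp hU
      obtain ⟨l, hl, hIoc⟩ := exists_Ioc_subset_of_mem_nhds hu
        ⟨0, pos_iff_ne_zero.mpr he₀C.2.1⟩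
      obtain ⟨c, hcA, hlc, hce⟩ := he₀C.2.2 l hl
      obtain ⟨y, hyD, hyc⟩ := hcA
      refine ⟨y, ⟨hsub (by rw [Set.mem_preimage, hyc]; exact hIoc ⟨hlc, le_of_lt hce⟩), hyD⟩, ?_⟩
      intro hye
      rw [hye] at hyc
      exact absurd (hyc ▸ hce) (lt_irrefl _)
    have heD : e ∈ D := hDclosed.closure_subset
      (mem_closure_iff_clusterPt.mpr (AccPt.clusterPt hacc))
    have hbot := discreteTopology_subtype_iff.mp hDdisc e heD
    rw [AccPt, hbot] at hacc
    exact hacc.ne rfl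
  · -- not σ-countably compact
    rintro ⟨C, hCC, hCu⟩
    have hex : ∃ n, ¬ (Subtype.val '' C n).Countable := by
      by_contra h
      push_neg at h
      apply hEun
      have hEeq : E = ⋃ n, Subtype.val '' C n := by
        ext a
        constructor
        · intro haE
          have : (⟨a, haE⟩ : ↥E) ∈ ⋃ n, C n := hCu ▸ Set.mem_univ _
          obtain ⟨n, hn⟩ := Set.mem_iUnion.mp this
          exact Set.mem_iUnion.mpr ⟨n, ⟨a, haE⟩, hn, rfl⟩
        · intro ha
          obtain ⟨n, y, _, rfl⟩ := Set.mem_iUnion.mp ha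
          exact y.2
      rw [hEeq]
      exact Set.countable_iUnion h
    obtain ⟨n₀, hn₀⟩ := hex
    set A : Set Ordinal := Subtype.val '' C n₀ with hAdef
    have hAE : A ⊆ E := by rintro a ⟨y, _, rfl⟩; exact y.2
    have hub := unbounded_of_uncountable (hAE.trans hE) hn₀
    have hclub := isClubIn_derivedClub hub
    obtain ⟨x, hx1, hxC⟩ := hcostat (derivedClub A) ⟨hclub.1, hclub.2.1, hclub.2.2⟩
    obtain ⟨f, hmono, hmem, hlt, hcof⟩ := exists_cofinal_seq hxC.1 hxC.2.1 hxC.2.2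
    choose ee hee1 hee2 using fun n => (hmem n : f n ∈ Subtype.val '' C n₀)
    set Z : Set ↥E := Set.range ee with hZdef
    have hZsub : Z ⊆ C n₀ := by rintro z ⟨n, rfl⟩; exact hee1 n
    have hinj : Function.Injective ee := fun a b h =>
      hmono.injective (by rw [← hee2 a, ← hee2 b, h])
    obtain ⟨p, hpC, hpacc⟩ := hCC n₀ Z hZsub (Set.countable_range ee)
      (Set.infinite_range_of_injective hinj)
    have himg : Subtype.val '' Z = Set.range f := by
      rw [hZdef, ← Set.range_comp]
      exact congrArg Set.range (funext hee2)
    have hax : AccPt (p : Ordinal) (𝓟 (Set.range f)) := himg ▸ accPt_subtype_image hpacc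
    have hpx : (p : Ordinal) = x := accPt_range_eq hmono hlt hcof hax
    exact hx1.2 (hpx ▸ p.2)
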